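/- Consider the three-state ensemble in ℂ² given by ψ₁ = (√3/2, 1/2), ψ₂ = (√3/2, −1/2), ψ₃ = (1, 0), with priors p₁ = p₂ = 4/(11 + √3) and p₃ = 1 − 2p₁. Then the failure rate of Holevo's quadratically weighted measurement strictly exceeds that of the pretty good measurement: 1 − Σ_k p_k ⟨ψ_k, M_k^{Hol} ψ_k⟩ > 1 − Σ_k p_k ⟨ψ_k, M_k^{PGM} ψ_k⟩, where M_k^{Hol} is the Belavkin weighted square-root measurement with weights W_k = p_k² and M_k^{PGM} is the one with weights W_k = p_k. (Numerically, P_fail^Holevo ≈ 0.4245 > P_fail^PGM ≈ 0.4224.) -/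

import Mathlib

open Matrix Filter
open scoped ComplexOrder

noncomputable section

/-- The rank-one projector `|ψ⟩⟨ψ|` as a matrix. -/
def proj {d : ℕ} (ψ : Fin d → ℂ) : Matrix (Fin d) (Fin d) ℂ := vecMulVec ψ (star ψ)

/-- The (real) expectation value `⟨ψ, M ψ⟩`. -/
def expVal {d : ℕ} (M : Matrix (Fin d) (Fin d) ℂ) (ψ : Fin d → ℂ) : ℝ :=
  (star ψ ⬝ᵥ M *ᵥ ψ).re

/-- A POVM: a finite family of PSD matrices summing to the identity. -/
def IsPOVM {d m : ℕ} (M : Fin m → Matrix (Fin d) (Fin d) ℂ) : Prop :=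
  (∀ k, (M k).PosSemidef) ∧ ∑ k, M k = 1

/-- The positive semidefinite square root of a positive semidefinite matrix
(the definition `Matrix.PosSemidef.sqrt` of the older Mathlib, since removed). -/
def Matrix.PosSemidef.sqrt {n 𝕜 : Type*} [Fintype n] [DecidableEq n] [RCLike 𝕜]
    {A : Matrix n n 𝕜} (hA : A.PosSemidef) : Matrix n n 𝕜 :=
  hA.1.eigenvectorUnitary.1 * diagonal ((↑) ∘ (√·) ∘ hA.1.eigenvalues) *
  (star hA.1.eigenvectorUnitary : Matrix n n 𝕜)

open scoped MatrixOrder in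
lemma sqrt_diag {S : Matrix (Fin 2) (Fin 2) ℂ} (hS : S.PosSemidef) (a b : ℝ)
    (ha : 0 ≤ a) (hb : 0 ≤ b) (hEq : S = Matrix.diagonal ![(a:ℂ),(b:ℂ)]) :
    hS.sqrt = Matrix.diagonal ![((Real.sqrt a : ℝ):ℂ), ((Real.sqrt b : ℝ):ℂ)] := by
  have hkey : hS.sqrt = CFC.sqrt S := by
    rw [CFC.sqrt_eq_cfc, cfc_nnreal_eq_real _ S (Matrix.nonneg_iff_posSemidef.mpr hS), hS.1.cfc_eq]
    simp only [Matrix.PosSemidef.sqrt, IsHermitian.cfc, Unitary.conjStarAlgAut_apply, Real.sqrt]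
  rw [hkey]
  refine (CFC.sqrt_unique (b := Matrix.diagonal ![((Real.sqrt a : ℝ):ℂ), ((Real.sqrt b : ℝ):ℂ)])
    ?_ (Matrix.nonneg_iff_posSemidef.mpr ?_))
  rotate_left
  · refine Matrix.posSemidef_diagonal_iff.mpr ?_
    intro i; fin_cases i <;> simp [Complex.zero_le_real, Real.sqrt_nonneg]
  · rw [Matrix.diagonal_mul_diagonal, hEq]
    ext i j
    fin_cases i <;> fin_cases j <;>
      simp [Matrix.diagonal_apply, ← Complex.ofReal_mul, Real.mul_self_sqrt, ha, hb]

lemma inv_diag (a b : ℂ) (ha : a ≠ 0) (hb : b ≠ 0) :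
    (Matrix.diagonal ![a,b])⁻¹ = Matrix.diagonal ![a⁻¹, b⁻¹] := by
  apply Matrix.inv_eq_right_inv
  rw [Matrix.diagonal_mul_diagonal, ← Matrix.diagonal_one]
  ext i j
  fin_cases i <;> fin_cases j <;> simp [Matrix.diagonal_apply, mul_inv_cancel₀, ha, hb]

lemma expVal_diag (x y w u v : ℝ) (ψ : Fin 2 → ℂ) (hψ : ψ = ![(u:ℂ),(v:ℂ)]) :
    expVal (Matrix.diagonal ![(x:ℂ),(y:ℂ)] * ((w:ℝ) • proj ψ) * Matrix.diagonal ![(x:ℂ),(y:ℂ)]) ψ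
      = w * (x*u^2 + y*v^2)^2 := by
  subst hψ
  simp only [expVal, proj, vecMulVec, Matrix.mul_apply, Matrix.mulVec, dotProduct,
    Fin.sum_univ_two, Matrix.smul_apply, Matrix.of_apply, Pi.star_apply, Matrix.diagonal,
    Matrix.cons_val_zero, Matrix.cons_val_one, Matrix.head_cons, Matrix.of_apply]
  simp [Complex.star_def, Complex.conj_ofReal]
  ring_nf

lemma S_eq (w₁ w₃ : ℝ) (ψ₁ ψ₂ ψ₃ : Fin 2 → ℂ)
    (hψ1 : ψ₁ = ![(Real.sqrt 3 / 2 : ℂ), (1/2 : ℂ)])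
    (hψ2 : ψ₂ = ![(Real.sqrt 3 / 2 : ℂ), (-(1/2) : ℂ)])
    (hψ3 : ψ₃ = ![1, 0]) :
    w₁ • proj ψ₁ + w₁ • proj ψ₂ + w₃ • proj ψ₃
      = Matrix.diagonal ![((3/2*w₁+w₃ : ℝ):ℂ), ((w₁/2 : ℝ):ℂ)] := by
  have h3 : (Real.sqrt 3 : ℂ) * (Real.sqrt 3 : ℂ) = 3 := by
    rw [← Complex.ofReal_mul, Real.mul_self_sqrt (by norm_num)]; norm_num
  subst hψ1 hψ2 hψ3
  ext i j
  fin_cases i <;> fin_cases j <;>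
    simp [proj, vecMulVec, Matrix.diagonal_apply, Complex.star_def, Complex.conj_ofReal,
        Complex.real_smul, map_ofNat]
  · linear_combination ((w₁:ℂ)/2) * h3
  · ring

lemma lt_inv_of_mul_le {s u c : ℝ} (hs : 0 < s) (hu : s < u) (hc : 0 < c)
    (h : c * u ≤ 1) : c < s⁻¹ := by
  rw [← one_div, lt_div_iff₀ hs]; nlinarith

lemma inv_lt_of_one_le {l s c : ℝ} (hl : 0 < l) (hs : l < s) (hc : 0 < c)
    (h : 1 ≤ c * l) : s⁻¹ < c := by
  rw [← one_div, div_lt_iff₀ (by linarith)]; nlinarith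

set_option maxHeartbeats 4000000 in
/-- for the three-state ensemble ψ₁ = (√3/2, 1/2), ψ₂ = (√3/2, −1/2),
ψ₃ = (1,0) with priors p₁ = p₂ = 4/(11+√3), p₃ = 1 − 2p₁, the failure rate of Holevo's
quadratically weighted measurement strictly exceeds that of the pretty good measurement. -/
theorem holevo_worse_than_pgm_three_states
    (ψ₁ ψ₂ ψ₃ : Fin 2 → ℂ)
    (hψ1 : ψ₁ = ![(Real.sqrt 3 / 2 : ℂ), (1/2 : ℂ)])
    (hψ2 : ψ₂ = ![(Real.sqrt 3 / 2 : ℂ), (-(1/2) : ℂ)])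
    (hψ3 : ψ₃ = ![1, 0])
    (p₁ p₂ p₃ : ℝ)
    (hp1 : p₁ = 4 / (11 + Real.sqrt 3)) (hp2 : p₂ = p₁) (hp3 : p₃ = 1 - 2 * p₁)
    (hSH : (p₁^2 • proj ψ₁ + p₂^2 • proj ψ₂ + p₃^2 • proj ψ₃).PosDef)
    (hSP : (p₁ • proj ψ₁ + p₂ • proj ψ₂ + p₃ • proj ψ₃).PosDef)
    (H₁ H₂ H₃ G₁ G₂ G₃ : Matrix (Fin 2) (Fin 2) ℂ)
    (hH1 : H₁ = (hSH.posSemidef.sqrt)⁻¹ * (p₁^2 • proj ψ₁) * (hSH.posSemidef.sqrt)⁻¹)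
    (hH2 : H₂ = (hSH.posSemidef.sqrt)⁻¹ * (p₂^2 • proj ψ₂) * (hSH.posSemidef.sqrt)⁻¹)
    (hH3 : H₃ = (hSH.posSemidef.sqrt)⁻¹ * (p₃^2 • proj ψ₃) * (hSH.posSemidef.sqrt)⁻¹)
    (hG1 : G₁ = (hSP.posSemidef.sqrt)⁻¹ * (p₁ • proj ψ₁) * (hSP.posSemidef.sqrt)⁻¹)
    (hG2 : G₂ = (hSP.posSemidef.sqrt)⁻¹ * (p₂ • proj ψ₂) * (hSP.posSemidef.sqrt)⁻¹)
    (hG3 : G₃ = (hSP.posSemidef.sqrt)⁻¹ * (p₃ • proj ψ₃) * (hSP.posSemidef.sqrt)⁻¹) :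
    1 - (p₁ * expVal H₁ ψ₁ + p₂ * expVal H₂ ψ₂ + p₃ * expVal H₃ ψ₃)
      > 1 - (p₁ * expVal G₁ ψ₁ + p₂ * expVal G₂ ψ₂ + p₃ * expVal G₃ ψ₃) := by
  subst hp2
  -- numeric bounds on √3 and the priors
  have hql : (1.7320508:ℝ) < Real.sqrt 3 :=
    (Real.lt_sqrt (by norm_num)).mpr (by norm_num)
  have hqu : Real.sqrt 3 < 1.7320509 :=
    (Real.sqrt_lt' (by norm_num)).mpr (by norm_num)
  have hqpos : (0:ℝ) < 11 + Real.sqrt 3 := by linarith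
  have hp1l : (0.31416776:ℝ) < p₂ := by
    rw [hp1, lt_div_iff₀ hqpos]; linarith
  have hp1u : p₂ < 0.31416777 := by
    rw [hp1, div_lt_iff₀ hqpos]; linarith
  have hp3l : (0.37166446:ℝ) < p₃ := by rw [hp3]; linarith
  have hp3u : p₃ < 0.37166448 := by rw [hp3]; linarith
  -- the two Gram matrices are diagonal
  have hSPeq := S_eq p₂ p₃ ψ₁ ψ₂ ψ₃ hψ1 hψ2 hψ3
  have hSHeq := S_eq (p₂^2) (p₃^2) ψ₁ ψ₂ ψ₃ hψ1 hψ2 hψ3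
  set aP : ℝ := 3/2*p₂+p₃ with haPdef
  set bP : ℝ := p₂/2 with hbPdef
  set aH : ℝ := 3/2*p₂^2+p₃^2 with haHdef
  set bH : ℝ := p₂^2/2 with hbHdef
  have hsq1l : (0.31416776:ℝ)^2 < p₂^2 := by
    nlinarith [sq_nonneg (p₂ - 0.31416776)]
  have hsq1u : p₂^2 < (0.31416777:ℝ)^2 := by
    nlinarith [mul_pos (sub_pos.mpr hp1u) (show (0:ℝ) < 0.31416777 + p₂ by linarith)]
  have hsq3l : (0.37166446:ℝ)^2 < p₃^2 := by
    nlinarith [sq_nonneg (p₃ - 0.37166446)]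
  have hsq3u : p₃^2 < (0.37166448:ℝ)^2 := by
    nlinarith [mul_pos (sub_pos.mpr hp3u) (show (0:ℝ) < 0.37166448 + p₃ by linarith)]
  have haP : (0:ℝ) < aP := by rw [haPdef]; linarith
  have hbP : (0:ℝ) < bP := by rw [hbPdef]; linarith
  have haH : (0:ℝ) < aH := by rw [haHdef]; nlinarith
  have hbH : (0:ℝ) < bH := by rw [hbHdef]; nlinarith
  have hsqP := sqrt_diag hSP.posSemidef aP bP haP.le hbP.le hSPeq
  have hsqH := sqrt_diag hSH.posSemidef aH bH haH.le hbH.le hSHeq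
  have hsaP : 0 < Real.sqrt aP := Real.sqrt_pos.mpr haP
  have hsbP : 0 < Real.sqrt bP := Real.sqrt_pos.mpr hbP
  have hsaH : 0 < Real.sqrt aH := Real.sqrt_pos.mpr haH
  have hsbH : 0 < Real.sqrt bH := Real.sqrt_pos.mpr hbH
  have hinvP : (hSP.posSemidef.sqrt)⁻¹
      = Matrix.diagonal ![(((Real.sqrt aP)⁻¹:ℝ):ℂ), (((Real.sqrt bP)⁻¹:ℝ):ℂ)] := by
    rw [hsqP, inv_diag _ _ (by exact_mod_cast hsaP.ne') (by exact_mod_cast hsbP.ne')]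
    congr 1
    funext i; fin_cases i <;> simp [Complex.ofReal_inv]
  have hinvH : (hSH.posSemidef.sqrt)⁻¹
      = Matrix.diagonal ![(((Real.sqrt aH)⁻¹:ℝ):ℂ), (((Real.sqrt bH)⁻¹:ℝ):ℂ)] := by
    rw [hsqH, inv_diag _ _ (by exact_mod_cast hsaH.ne') (by exact_mod_cast hsbH.ne')]
    congr 1
    funext i; fin_cases i <;> simp [Complex.ofReal_inv]
  -- real-entry forms of the states
  have hψ1' : ψ₁ = ![((Real.sqrt 3/2:ℝ):ℂ), ((1/2:ℝ):ℂ)] := by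
    rw [hψ1]; funext i; fin_cases i <;> push_cast <;> norm_num
  have hψ2' : ψ₂ = ![((Real.sqrt 3/2:ℝ):ℂ), ((-(1/2):ℝ):ℂ)] := by
    rw [hψ2]; funext i; fin_cases i <;> push_cast <;> norm_num
  have hψ3' : ψ₃ = ![((1:ℝ):ℂ), ((0:ℝ):ℂ)] := by
    rw [hψ3]; funext i; fin_cases i <;> push_cast <;> norm_num
  -- expectation values
  have e1 : expVal G₁ ψ₁
      = p₂ * ((Real.sqrt aP)⁻¹*(Real.sqrt 3/2)^2 + (Real.sqrt bP)⁻¹*(1/2)^2)^2 := by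
    rw [hG1, hinvP]; exact expVal_diag _ _ _ _ _ _ hψ1'
  have e2 : expVal G₂ ψ₂
      = p₂ * ((Real.sqrt aP)⁻¹*(Real.sqrt 3/2)^2 + (Real.sqrt bP)⁻¹*(-(1/2))^2)^2 := by
    rw [hG2, hinvP]; exact expVal_diag _ _ _ _ _ _ hψ2'
  have e3 : expVal G₃ ψ₃
      = p₃ * ((Real.sqrt aP)⁻¹*(1:ℝ)^2 + (Real.sqrt bP)⁻¹*(0:ℝ)^2)^2 := by
    rw [hG3, hinvP]; exact expVal_diag _ _ _ _ _ _ hψ3'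
  have e4 : expVal H₁ ψ₁
      = p₂^2 * ((Real.sqrt aH)⁻¹*(Real.sqrt 3/2)^2 + (Real.sqrt bH)⁻¹*(1/2)^2)^2 := by
    rw [hH1, hinvH]; exact expVal_diag _ _ _ _ _ _ hψ1'
  have e5 : expVal H₂ ψ₂
      = p₂^2 * ((Real.sqrt aH)⁻¹*(Real.sqrt 3/2)^2 + (Real.sqrt bH)⁻¹*(-(1/2))^2)^2 := by
    rw [hH2, hinvH]; exact expVal_diag _ _ _ _ _ _ hψ2'
  have e6 : expVal H₃ ψ₃
      = p₃^2 * ((Real.sqrt aH)⁻¹*(1:ℝ)^2 + (Real.sqrt bH)⁻¹*(0:ℝ)^2)^2 := by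
    rw [hH3, hinvH]; exact expVal_diag _ _ _ _ _ _ hψ3'
  have hu2 : (Real.sqrt 3/2)^2 = 3/4 := by
    rw [div_pow, Real.sq_sqrt (by norm_num : (0:ℝ) ≤ 3)]; norm_num
  -- bounds on the square roots
  have hsaPl : (0.9181046:ℝ) < Real.sqrt aP :=
    (Real.lt_sqrt (by norm_num)).mpr (by rw [haPdef]; linarith)
  have hsaPu : Real.sqrt aP < 0.9181047 :=
    (Real.sqrt_lt' (by norm_num)).mpr (by rw [haPdef]; linarith)
  have hsbPl : (0.396338:ℝ) < Real.sqrt bP :=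
    (Real.lt_sqrt (by norm_num)).mpr (by rw [hbPdef]; linarith)
  have hsbPu : Real.sqrt bP < 0.3963381 :=
    (Real.sqrt_lt' (by norm_num)).mpr (by rw [hbPdef]; linarith)
  have hsaHl : (0.534964:ℝ) < Real.sqrt aH :=
    (Real.lt_sqrt (by norm_num)).mpr (by rw [haHdef]; linarith)
  have hsaHu : Real.sqrt aH < 0.5349641 :=
    (Real.sqrt_lt' (by norm_num)).mpr (by rw [haHdef]; linarith)
  have hsbHl : (0.2221501:ℝ) < Real.sqrt bH :=
    (Real.lt_sqrt (by norm_num)).mpr (by rw [hbHdef]; linarith)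
  have hsbHu : Real.sqrt bH < 0.2221502 :=
    (Real.sqrt_lt' (by norm_num)).mpr (by rw [hbHdef]; linarith)
  -- bounds on the inverses of the square roots
  have hxPl : (1.0892003:ℝ) < (Real.sqrt aP)⁻¹ :=
    lt_inv_of_mul_le hsaP hsaPu (by norm_num) (by norm_num)
  have hxPu : (Real.sqrt aP)⁻¹ < (1.0892006:ℝ) :=
    inv_lt_of_one_le (by norm_num) hsaPl (by norm_num) (by norm_num)
  have hyPl : (2.5230983:ℝ) < (Real.sqrt bP)⁻¹ :=
    lt_inv_of_mul_le hsbP hsbPu (by norm_num) (by norm_num)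
  have hyPu : (Real.sqrt bP)⁻¹ < (2.5230990:ℝ) :=
    inv_lt_of_one_le (by norm_num) hsbPl (by norm_num) (by norm_num)
  have hxHl : (1.8692843:ℝ) < (Real.sqrt aH)⁻¹ :=
    lt_inv_of_mul_le hsaH hsaHu (by norm_num) (by norm_num)
  have hxHu : (Real.sqrt aH)⁻¹ < (1.8692847:ℝ) :=
    inv_lt_of_one_le (by norm_num) hsaHl (by norm_num) (by norm_num)
  have hyHl : (4.5014589:ℝ) < (Real.sqrt bH)⁻¹ :=
    lt_inv_of_mul_le hsbH hsbHu (by norm_num) (by norm_num)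
  have hyHu : (Real.sqrt bH)⁻¹ < (4.5014610:ℝ) :=
    inv_lt_of_one_le (by norm_num) hsbHl (by norm_num) (by norm_num)
  rw [e1, e2, e3, e4, e5, e6, hu2]
  set xP := (Real.sqrt aP)⁻¹
  set yP := (Real.sqrt bP)⁻¹
  set xH := (Real.sqrt aH)⁻¹
  set yH := (Real.sqrt bH)⁻¹
  have hxP0 : 0 < xP := by positivity
  have hyP0 : 0 < yP := by positivity
  have hxH0 : 0 < xH := by positivity
  have hyH0 : 0 < yH := by positivity
  -- lower bound for the PGM success probability
  have hPGM : (0.31416776:ℝ) * (0.31416776 * ((1.0892003:ℝ)*(3/4) + (2.5230983:ℝ)*(1/4))^2)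
        + 0.31416776 * (0.31416776 * ((1.0892003:ℝ)*(3/4) + (2.5230983:ℝ)*(1/4))^2)
        + 0.37166446 * (0.37166446 * ((1.0892003:ℝ)*(1:ℝ)^2 + (2.5230983:ℝ)*(0:ℝ)^2)^2)
      ≤ p₂ * (p₂ * (xP*(3/4) + yP*(1/2)^2)^2)
        + p₂ * (p₂ * (xP*(3/4) + yP*(-(1/2))^2)^2)
        + p₃ * (p₃ * (xP*(1:ℝ)^2 + yP*(0:ℝ)^2)^2) := by
    gcongr <;> first | positivity | linarith | norm_num
  -- upper bound for the Holevo success probability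
  have hHol : p₂ * (p₂^2 * (xH*(3/4) + yH*(1/2)^2)^2)
        + p₂ * (p₂^2 * (xH*(3/4) + yH*(-(1/2))^2)^2)
        + p₃ * (p₃^2 * (xH*(1:ℝ)^2 + yH*(0:ℝ)^2)^2)
      ≤ (0.31416777:ℝ) * (0.31416777^2 * ((1.8692847:ℝ)*(3/4) + (4.5014610:ℝ)*(1/4))^2)
        + 0.31416777 * (0.31416777^2 * ((1.8692847:ℝ)*(3/4) + (4.5014610:ℝ)*(1/4))^2)
        + 0.37166448 * (0.37166448^2 * ((1.8692847:ℝ)*(1:ℝ)^2 + (4.5014610:ℝ)*(0:ℝ)^2)^2) := by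
    gcongr <;> first | positivity | linarith | norm_num
  have key : (0.31416777:ℝ) * (0.31416777^2 * ((1.8692847:ℝ)*(3/4) + (4.5014610:ℝ)*(1/4))^2)
        + 0.31416777 * (0.31416777^2 * ((1.8692847:ℝ)*(3/4) + (4.5014610:ℝ)*(1/4))^2)
        + 0.37166448 * (0.37166448^2 * ((1.8692847:ℝ)*(1:ℝ)^2 + (4.5014610:ℝ)*(0:ℝ)^2)^2)
      < (0.31416776:ℝ) * (0.31416776 * ((1.0892003:ℝ)*(3/4) + (2.5230983:ℝ)*(1/4))^2)
        + 0.31416776 * (0.31416776 * ((1.0892003:ℝ)*(3/4) + (2.5230983:ℝ)*(1/4))^2)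
        + 0.37166446 * (0.37166446 * ((1.0892003:ℝ)*(1:ℝ)^2 + (2.5230983:ℝ)*(0:ℝ)^2)^2) := by
    norm_num
  linarith
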